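/- Let C_m be the directed cycle on vertices Z_m with edges (i, (i+1) mod m). For n ≥ 1, the associative spectrum s_n(A(C_m)) of the graph algebra of C_m equals the number of zag sequences (d_1,…,d_n) of length n satisfying d_{i+1} − d_i ∈ {2−m, 3−m, …, 0, 1} for all i ∈ {1,…,n−1}. -/

import Mathlib

namespace AssocSpec

/-- Bracketings of products `x₁ x₂ ⋯ xₙ` represented as binary trees whose
leaves, read from left to right, are the variables `x₁, …, xₙ`. -/
inductive BTree : Type
  | leaf : BTree
  | node : BTree → BTree → BTree

namespace BTree

/-- The size of a bracketing: its number of variables (leaves). -/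
def size : BTree → ℕ
  | leaf => 1
  | node l r => l.size + r.size

/-- Evaluate a bracketing in a magma `(A, op)`, the leaves taking the values
`f k, f (k+1), …` from left to right. -/
def evalFrom {A : Type*} (op : A → A → A) : BTree → (ℕ → A) → ℕ → A
  | leaf, f, k => f k
  | node l r, f, k => op (evalFrom op l f k) (evalFrom op r f (k + l.size))

/-- The term operation induced by a bracketing `t` on a magma `(A, op)`;
the `i`-th variable (0-indexed) takes the value `f i`. -/
def termOp {A : Type*} (op : A → A → A) (t : BTree) (f : ℕ → A) : A :=
  evalFrom op t f 0

/-- The depth sequence of the DFS tree `G(t)` of a bracketing `t`: the `i`-th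
entry is the depth of the `i`-th variable (0-indexed) in `G(t)`. -/
def depths : BTree → List ℕ
  | leaf => [0]
  | node l r => l.depths ++ r.depths.map (· + 1)

/-- The depth of the `i`-th variable (0-indexed) in the DFS tree `G(t)`. -/
def depth (t : BTree) (i : ℕ) : ℕ := t.depths.getD i 0

/-- The height of the DFS tree `G(t)`: the maximum depth of a variable. -/
def height (t : BTree) : ℕ := t.depths.foldr max 0

/-- The edges of the DFS tree `G(t)`, the variables being indexed from the
given offset: `(p, c)` is an edge iff `x_p` is the parent of `x_c`. -/
def edgesFrom : BTree → ℕ → List (ℕ × ℕ)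
  | leaf, _ => []
  | node l r, k => (k, k + l.size) :: (l.edgesFrom k ++ r.edgesFrom (k + l.size))

/-- The edges of the DFS tree `G(t)` (variables indexed from `0`). -/
def edges (t : BTree) : List (ℕ × ℕ) := t.edgesFrom 0

end BTree

open Classical in
/-- The operation of the graph algebra of the digraph with vertex set `V` and
edge relation `E`; `none` plays the role of `∞`. -/
noncomputable def gaOp {V : Type*} (E : V → V → Prop) :
    Option V → Option V → Option V
  | some x, some y => if E x y then some x else none
  | _, _ => none

/-- The magma `(A, op)` satisfies the bracketing identity `t ≈ t'`. -/
def Satisfies {A : Type*} (op : A → A → A) (t t' : BTree) : Prop :=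
  ∀ f : ℕ → A, BTree.termOp op t f = BTree.termOp op t' f

/-- The `n`-th member `s_n` of the associative spectrum of the magma `(A, op)`:
the number of distinct term operations induced by bracketings of size `n`. -/
noncomputable def spectrum {A : Type*} (op : A → A → A) (n : ℕ) : ℕ :=
  Set.ncard {g : (ℕ → A) → A | ∃ t : BTree, t.size = n ∧ g = BTree.termOp op t}

/-- Reachability (by a walk) in the digraph with edge relation `E`. -/
def Reach {V : Type*} (E : V → V → Prop) : V → V → Prop :=
  Relation.ReflTransGen E

/-- `u` and `v` lie in the same strongly connected component. -/
def SameSCC {V : Type*} (E : V → V → Prop) (u v : V) : Prop :=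
  Reach E u v ∧ Reach E v u

/-- The strongly connected component of `v`, as a set of vertices. -/
def scc {V : Type*} (E : V → V → Prop) (v : V) : Set V :=
  {u | SameSCC E u v}

/-- `v` lies in a nontrivial strongly connected component (one carrying at
least one edge), i.e. `v` lies on a closed walk of positive length. -/
def InNontrivialSCC {V : Type*} (E : V → V → Prop) (v : V) : Prop :=
  ∃ u, E v u ∧ Reach E u v

/-- The induced subgraph on the set `K` (with the edge relation `E`) is an
`m`-whirl: `K` is partitioned into blocks `B 0, …, B (m-1)` so that edges go
exactly from each block to the cyclically next one. -/
def IsWhirlOn {V : Type*} (E : V → V → Prop) (K : Set V) (m : ℕ) : Prop :=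
  ∃ B : ZMod m → Set V,
    (∀ i, (B i).Nonempty) ∧
    (∀ i, B i ⊆ K) ∧
    (∀ x ∈ K, ∃! i, x ∈ B i) ∧
    (∀ x ∈ K, ∀ y ∈ K, (E x y ↔ ∃ i, x ∈ B i ∧ y ∈ B (i + 1)))

/-- `p 0 → p 1 → ⋯ → p len` is a path (a walk with pairwise distinct
vertices) in the digraph with edge relation `E`. -/
def IsPath {V : Type*} (E : V → V → Prop) (len : ℕ) (p : ℕ → V) : Prop :=
  (∀ i < len, E (p i) (p (i + 1))) ∧
  (∀ i ≤ len, ∀ j ≤ len, p i = p j → i = j)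

/-- The walk `p 0 → ⋯ → p len` is pleasant: all its vertices belong to
trivial strongly connected components. -/
def IsPleasant {V : Type*} (E : V → V → Prop) (len : ℕ) (p : ℕ → V) : Prop :=
  ∀ i ≤ len, ¬ InNontrivialSCC E (p i)

/-- The connected component `K` (of an undirected graph) is complete
bipartite: it splits into two nonempty parts with edges exactly between
vertices of different parts. -/
def IsCompleteBipartiteOn {V : Type*} (E : V → V → Prop) (K : Set V) : Prop :=
  ∃ B1 B2 : Set V, B1.Nonempty ∧ B2.Nonempty ∧ B1 ∪ B2 = K ∧ B1 ∩ B2 = ∅ ∧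
    ∀ x ∈ K, ∀ y ∈ K, (E x y ↔ (x ∈ B1 ∧ y ∈ B2) ∨ (x ∈ B2 ∧ y ∈ B1))

/-- A DFS tree of size `n`: a rooted directed tree on the vertices
`x₁, …, xₙ` (here `Fin n`, the root being `0`), given by its parent function,
such that the parent of every non-root vertex precedes it and the vertex set
of the induced subtree rooted at any vertex `i` is an interval `[i, i']`.
(The parent of the root is, by convention, the root itself.) -/
structure DFSTree (n : ℕ) where
  parent : Fin n → Fin n
  parent_lt : ∀ i : Fin n, 0 < (i : ℕ) → (parent i : ℕ) < (i : ℕ)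
  parent_root : ∀ i : Fin n, (i : ℕ) = 0 → parent i = i
  interval : ∀ i j k : Fin n, i ≤ j → j ≤ k →
    (∃ a : ℕ, parent^[a] k = i) → (∃ a : ℕ, parent^[a] j = i)

/-- The depth of the vertex `i` in a DFS tree: the length of the path from
the root to `i`. -/
noncomputable def DFSTree.depth {n : ℕ} (T : DFSTree n) (i : Fin n) : ℕ :=
  sInf {k : ℕ | (T.parent^[k] i : ℕ) = 0}

/-- The height of a DFS tree: the maximum depth of a vertex. -/
noncomputable def DFSTree.height {n : ℕ} (T : DFSTree n) : ℕ :=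
  Finset.univ.sup fun i => T.depth i

/-- The vertex `i` is a leaf (childless vertex) of the DFS tree `T`. -/
def DFSTree.IsLeaf {n : ℕ} (T : DFSTree n) (i : Fin n) : Prop :=
  ∀ j : Fin n, T.parent j = i → j = i

/-- `t_h(n)`: the number of DFS trees of size `n` of height at most `h`. -/
noncomputable def tcount (h n : ℕ) : ℕ :=
  Nat.card {T : DFSTree n // T.height ≤ h}

/-- `d` is a zag sequence: `d₁ = 0`, `d₂ = 1`, and
`1 ≤ d_{i+1} ≤ d_i + 1` for all `i` (1-indexed as in the paper;
here `d : Fin n → ℕ` is 0-indexed). -/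
def IsZag {n : ℕ} (d : Fin n → ℕ) : Prop :=
  (∀ h : 0 < n, d ⟨0, h⟩ = 0) ∧
  (∀ h : 1 < n, d ⟨1, h⟩ = 1) ∧
  (∀ i : ℕ, ∀ h : i + 1 < n,
    1 ≤ d ⟨i + 1, h⟩ ∧ d ⟨i + 1, h⟩ ≤ d ⟨i, Nat.lt_of_succ_lt h⟩ + 1)

/-- `M(t,t')`: the largest `m` such that the depth sequences of the DFS trees
of the bracketings `t` and `t'` are congruent modulo `m`. -/
noncomputable def Mval (t t' : BTree) : ℕ :=
  sSup {m : ℕ | ∀ i < t.size, t.depth i ≡ t'.depth i [MOD m]}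

end AssocSpec
namespace AssocSpec

namespace BTree

lemma depths_ne_nil (t : BTree) : t.depths ≠ [] := by
  induction t with
  | leaf => simp [depths]
  | node l r ihl ihr =>
    simp only [depths, ne_eq, List.append_eq_nil_iff]
    tauto

lemma length_depths (t : BTree) : t.depths.length = t.size := by
  induction t with
  | leaf => rfl
  | node l r ihl ihr => simp [depths, size, ihl, ihr]

lemma size_pos (t : BTree) : 0 < t.size := by
  rw [← length_depths]
  exact List.length_pos_iff.mpr t.depths_ne_nil

lemma depth_zero (t : BTree) : t.depth 0 = 0 := by
  induction t with
  | leaf => rfl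
  | node l r ihl ihr =>
    have h0 : 0 < l.depths.length := List.length_pos_iff.mpr l.depths_ne_nil
    simp only [depth, depths]
    rw [List.getD_append _ _ _ _ h0]
    exact ihl

lemma depth_node_left (l r : BTree) {i : ℕ} (h : i < l.size) :
    (node l r).depth i = l.depth i := by
  have h' : i < l.depths.length := by rw [length_depths]; exact h
  simp only [depth, depths]
  exact List.getD_append _ _ _ _ h'

lemma depth_node_right (l r : BTree) {i : ℕ} (h : i < r.size) :
    (node l r).depth (l.size + i) = r.depth i + 1 := by
  have hl : l.depths.length = l.size := length_depths l
  have hr : i < r.depths.length := by rw [length_depths]; exact h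
  simp only [depth, depths]
  rw [List.getD_append_right _ _ _ _ (by omega)]
  have h2 : l.size + i - l.depths.length = i := by omega
  rw [h2]
  rw [List.getD_eq_getElem _ _ (by simpa using hr), List.getElem_map,
      List.getD_eq_getElem _ _ hr]

lemma depth_succ_bounds (t : BTree) {i : ℕ} (h : i + 1 < t.size) :
    1 ≤ t.depth (i + 1) ∧ t.depth (i + 1) ≤ t.depth i + 1 := by
  induction t generalizing i with
  | leaf => simp [size] at h
  | node l r ihl ihr =>
    have hsz : i + 1 < l.size + r.size := h
    rcases lt_trichotomy (i + 1) l.size with hlt | heq | hgt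
    · rw [depth_node_left l r hlt, depth_node_left l r (by omega)]
      exact ihl hlt
    · have h1 : (node l r).depth (i + 1) = r.depth 0 + 1 := by
        have h2 := depth_node_right l r (i := 0) r.size_pos
        rw [Nat.add_zero] at h2
        rw [heq, h2]
      rw [h1, r.depth_zero]
      omega
    · obtain ⟨j, rfl⟩ : ∃ j, i = l.size + j := ⟨i - l.size, by omega⟩
      have hj : j + 1 < r.size := by omega
      rw [show l.size + j + 1 = l.size + (j + 1) by omega,
          depth_node_right l r (by omega : j + 1 < r.size),
          depth_node_right l r (by omega : j < r.size)]
      have := ihr hj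
      omega

lemma isZag_depth (t : BTree) {n : ℕ} (ht : t.size = n) :
    IsZag (fun i : Fin n => t.depth i) := by
  subst ht
  refine ⟨fun h => t.depth_zero, fun h => ?_, fun i h => t.depth_succ_bounds h⟩
  have h1 := t.depth_succ_bounds (i := 0) h
  rw [Nat.zero_add] at h1
  have h0 := t.depth_zero
  simp only
  omega

/-- Zag property for lists. -/
def ZagL (L : List ℕ) : Prop :=
  L ≠ [] ∧ L.getD 0 0 = 0 ∧
    ∀ i, i + 1 < L.length →
      1 ≤ L.getD (i + 1) 0 ∧ L.getD (i + 1) 0 ≤ L.getD i 0 + 1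

lemma exists_tree_of_zagL :
    ∀ (n : ℕ) (L : List ℕ), L.length = n → ZagL L → ∃ t : BTree, t.depths = L := by
  intro n
  induction n using Nat.strong_induction_on with
  | _ n ih =>
    intro L hlen hL
    obtain ⟨hne, h0, hstep⟩ := hL
    have hn1 : 1 ≤ n := by
      rw [← hlen]
      exact List.length_pos_iff.mpr hne
    rcases eq_or_lt_of_le hn1 with h1 | h2
    · -- n = 1, L = [0]
      match L, (by omega : L.length = 1) ▸ hlen with
      | [a], _ =>
        have : a = 0 := h0
        exact ⟨leaf, by simp [depths, this]⟩
    · -- n ≥ 2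
      have h1 : L.getD 1 0 = 1 := by
        have h' := hstep 0 (by omega)
        rw [Nat.zero_add] at h'
        omega
      let P : ℕ → Prop := fun j => L.getD j 0 = 1
      letI hPd : DecidablePred P := fun j => Nat.decEq _ _
      set j := Nat.findGreatest P (n - 1) with hj
      have hj1 : 1 ≤ j := Nat.le_findGreatest (P := P) (by omega) h1
      have hjn : j ≤ n - 1 := Nat.findGreatest_le (P := P) (n - 1)
      have hjP : L.getD j 0 = 1 := Nat.findGreatest_spec (P := P) (m := 1) (by omega) h1
      have hgt : ∀ k, j < k → k ≤ n - 1 → L.getD k 0 ≠ 1 := by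
        intro k hk hk'
        exact Nat.findGreatest_is_greatest (P := P) hk hk'
      -- all entries at positive index are ≥ 1
      have hpos : ∀ k, 1 ≤ k → k < n → 1 ≤ L.getD k 0 := by
        intro k hk hkn
        obtain ⟨k', rfl⟩ : ∃ k', k = k' + 1 := ⟨k - 1, by omega⟩
        exact (hstep k' (by omega)).1
      -- entries strictly after j are ≥ 2
      have hge2 : ∀ k, j < k → k < n → 2 ≤ L.getD k 0 := by
        intro k hk hkn
        have := hpos k (by omega) hkn
        have := hgt k hk (by omega)
        omega
      have hAlen : (L.take j).length = j := by
        rw [List.length_take, hlen]; omega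
      have hBlen : ((L.drop j).map (· - 1)).length = n - j := by
        rw [List.length_map, List.length_drop, hlen]
      have hAget : ∀ i, i < j → (L.take j).getD i 0 = L.getD i 0 := by
        intro i hi
        rw [List.getD_eq_getElem _ 0 (by omega), List.getD_eq_getElem L 0 (n := i) (by omega)]
        exact List.getElem_take
      have hBget : ∀ i, i < n - j →
          ((L.drop j).map (· - 1)).getD i 0 = L.getD (j + i) 0 - 1 := by
        intro i hi
        rw [List.getD_eq_getElem _ 0 (by omega),
            List.getD_eq_getElem L 0 (n := j + i) (by omega)]
        rw [List.getElem_map, List.getElem_drop]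
      have hAzag : ZagL (L.take j) := by
        refine ⟨by rw [← List.length_pos_iff, hAlen]; omega, ?_, ?_⟩
        · rw [hAget 0 (by omega)]; exact h0
        · intro i hi
          rw [hAlen] at hi
          rw [hAget (i + 1) hi, hAget i (by omega)]
          exact hstep i (by omega)
      have hBzag : ZagL ((L.drop j).map (· - 1)) := by
        refine ⟨by rw [← List.length_pos_iff, hBlen]; omega, ?_, ?_⟩
        · rw [hBget 0 (by omega)]
          simp only [Nat.add_zero]
          omega
        · intro i hi
          rw [hBlen] at hi
          rw [hBget (i + 1) hi, hBget i (by omega)]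
          have hs := hstep (j + i) (by omega)
          have hg := hge2 (j + i + 1) (by omega) (by omega)
          have hp := hpos (j + i) (by omega) (by omega)
          rw [show j + (i + 1) = j + i + 1 by omega]
          omega
      obtain ⟨l, hl⟩ := ih j (by omega) (L.take j) hAlen hAzag
      obtain ⟨r, hr⟩ := ih (n - j) (by omega) ((L.drop j).map (· - 1)) hBlen hBzag
      refine ⟨node l r, ?_⟩
      show l.depths ++ r.depths.map (· + 1) = L
      have hmap : (((L.drop j).map (· - 1)).map (· + 1)) = L.drop j := by
        apply List.ext_getElem
        · simp
        · intro i h1' h2'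
          simp only [List.getElem_map, List.getElem_drop]
          have hlen' : i < n - j := by
            have := h2'
            simp only [List.length_drop, hlen] at this
            omega
          have := hpos (j + i) (by omega) (by omega)
          rw [List.getD_eq_getElem _ _ (by rw [hlen]; omega)] at this
          omega
      rw [hl, hr, hmap, List.take_append_drop]

lemma exists_tree_isZag {n : ℕ} (hn : 1 ≤ n) (d : Fin n → ℕ) (hd : IsZag d) :
    ∃ t : BTree, t.size = n ∧ ∀ i : Fin n, t.depth i = d i := by
  have hlen : (List.ofFn d).length = n := by simp
  have hzl : ZagL (List.ofFn d) := by
    refine ⟨?_, ?_, ?_⟩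
    · rw [← List.length_pos_iff, hlen]; omega
    · rw [List.getD_eq_getElem _ _ (by omega), List.getElem_ofFn]
      exact hd.1 (by omega)
    · intro i hi
      rw [hlen] at hi
      rw [List.getD_eq_getElem _ _ (by omega), List.getD_eq_getElem _ _ (by omega),
          List.getElem_ofFn, List.getElem_ofFn]
      exact hd.2.2 i hi
  obtain ⟨t, ht⟩ := exists_tree_of_zagL n (List.ofFn d) hlen hzl
  refine ⟨t, ?_, ?_⟩
  · rw [← length_depths, ht, hlen]
  · intro i
    have hi : (i : ℕ) < (List.ofFn d).length := by rw [hlen]; exact i.2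
    rw [depth, ht, List.getD_eq_getElem _ _ hi, List.getElem_ofFn]

end BTree

open BTree in
lemma gaOp_eq_some_iff {V : Type*} (E : V → V → Prop) (a b : Option V) (v : V) :
    gaOp E a b = some v ↔ a = some v ∧ ∃ y, b = some y ∧ E v y := by
  cases a with
  | none => simp [gaOp]
  | some x =>
    cases b with
    | none => simp [gaOp]
    | some y =>
      simp only [gaOp]
      split_ifs with h
      · constructor
        · rintro h'
          injection h' with h''
          subst h''
          exact ⟨rfl, y, rfl, h⟩
        · rintro ⟨h1, _⟩
          injection h1 with h1
          rw [h1]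
      · constructor
        · intro h'
          cases h'
        · rintro ⟨h1, y', hy', hE⟩
          injection h1 with h1
          injection hy' with hy'
          subst h1
          subst hy'
          exact absurd hE h

open BTree in
lemma evalFrom_eq_some_iff (m : ℕ) (t : BTree) (f : ℕ → Option (ZMod m)) (v : ZMod m) :
    ∀ k, evalFrom (gaOp (fun i j : ZMod m => j = i + 1)) t f k = some v ↔
      ∀ i < t.size, f (k + i) = some (v + (t.depth i : ZMod m)) := by
  induction t generalizing v with
  | leaf =>
    intro k
    show f k = some v ↔ _
    simp only [size, Nat.lt_one_iff]
    constructor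
    · intro h i hi
      subst hi
      rw [Nat.add_zero, depth_zero]
      simpa using h
    · intro h
      have := h 0 rfl
      rw [Nat.add_zero, depth_zero] at this
      simpa using this
  | node l r ihl ihr =>
    intro k
    show gaOp _ (evalFrom _ l f k) (evalFrom _ r f (k + l.size)) = some v ↔ _
    rw [gaOp_eq_some_iff]
    constructor
    · rintro ⟨h1, y, h2, rfl⟩
      rw [ihl] at h1
      rw [ihr] at h2
      intro i hi
      have hi' : i < l.size + r.size := hi
      rcases lt_or_ge i l.size with hil | hil
      · rw [depth_node_left l r hil]
        exact h1 i hil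
      · obtain ⟨j, rfl⟩ : ∃ j, i = l.size + j := ⟨i - l.size, by omega⟩
        have hj : j < r.size := by omega
        rw [depth_node_right l r hj]
        have h3 := h2 j hj
        rw [← Nat.add_assoc, h3]
        congr 1
        push_cast
        ring
    · intro h
      refine ⟨?_, v + 1, ?_, rfl⟩
      · rw [ihl]
        intro i hi
        rw [← depth_node_left l r hi]
        exact h i (show i < l.size + r.size by omega)
      · rw [ihr]
        intro j hj
        have h3 := h (l.size + j) (show l.size + j < l.size + r.size by omega)
        rw [depth_node_right l r hj, ← Nat.add_assoc] at h3
        rw [h3]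
        congr 1
        push_cast
        ring

open BTree in
lemma termOp_eq_some_iff (m : ℕ) (t : BTree) (f : ℕ → Option (ZMod m)) (v : ZMod m) :
    termOp (gaOp (fun i j : ZMod m => j = i + 1)) t f = some v ↔
      ∀ i < t.size, f i = some (v + (t.depth i : ZMod m)) := by
  rw [termOp, evalFrom_eq_some_iff]
  constructor
  · intro h i hi
    have := h i hi
    rwa [Nat.zero_add] at this
  · intro h i hi
    rw [Nat.zero_add]
    exact h i hi

open Classical in
/-- The candidate term operation attached to a mod-`m` depth sequence. -/
noncomputable def Gop (n m : ℕ) (c : Fin n → ZMod m) :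
    (ℕ → Option (ZMod m)) → Option (ZMod m) :=
  fun f => if ∀ i : Fin n, f i = (f 0).map (· + c i) then f 0 else none

open BTree in
lemma termOp_eq_Gop {n m : ℕ} (hn : 1 ≤ n) (t : BTree) (ht : t.size = n) :
    termOp (gaOp (fun i j : ZMod m => j = i + 1)) t
      = Gop n m (fun i : Fin n => (t.depth i : ZMod m)) := by
  classical
  funext f
  rcases hf0 : f 0 with _ | x
  · -- f 0 = none : both sides are none
    have hL : termOp (gaOp (fun i j : ZMod m => j = i + 1)) t f = none := by
      rcases h : termOp (gaOp (fun i j : ZMod m => j = i + 1)) t f with _ | v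
      · rfl
      · exfalso
        rw [termOp_eq_some_iff] at h
        have := h 0 (by omega)
        rw [hf0] at this
        cases this
    have hR : Gop n m (fun i : Fin n => (t.depth i : ZMod m)) f = none := by
      rw [Gop]
      split_ifs with h
      · exact hf0
      · rfl
    rw [hL, hR]
  · by_cases hc : ∀ i : Fin n, f i = (f 0).map (· + ((t.depth i : ℕ) : ZMod m))
    · have hL : termOp (gaOp (fun i j : ZMod m => j = i + 1)) t f = some x := by
        rw [termOp_eq_some_iff]
        intro i hi
        have := hc ⟨i, ht ▸ hi⟩
        rw [hf0] at this
        simpa using this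
      rw [hL, Gop, if_pos hc, hf0]
    · have hL : termOp (gaOp (fun i j : ZMod m => j = i + 1)) t f = none := by
        rcases h : termOp (gaOp (fun i j : ZMod m => j = i + 1)) t f with _ | v
        · rfl
        · exfalso
          rw [termOp_eq_some_iff] at h
          have h00 := h 0 (by omega)
          rw [t.depth_zero, hf0] at h00
          have hv : x = v := by simpa using h00
          subst hv
          apply hc
          intro i
          have := h i (ht ▸ i.2)
          rw [hf0]
          simpa using this
      rw [hL, Gop, if_neg hc]

lemma Gop_injOn {n m : ℕ} (hn : 0 < n) :
    Set.InjOn (Gop n m) {c : Fin n → ZMod m | c ⟨0, hn⟩ = 0} := by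
  classical
  intro c hc c' hc' h
  have hc0 : c ⟨0, hn⟩ = 0 := hc
  have hc0' : c' ⟨0, hn⟩ = 0 := hc'
  set f : ℕ → Option (ZMod m) := fun j => if hj : j < n then some (c ⟨j, hj⟩) else none with hf
  have hf0 : f 0 = some 0 := by
    show (if hj : 0 < n then some (c ⟨0, hj⟩) else none) = some 0
    rw [dif_pos hn, hc0]
  have hfi : ∀ i : Fin n, f i = some (c i) := by
    intro i
    show (if hj : (i : ℕ) < n then some (c ⟨(i : ℕ), hj⟩) else none) = some (c i)
    rw [dif_pos i.2]
  have hcond : ∀ i : Fin n, f i = (f 0).map (· + c i) := by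
    intro i
    rw [hf0, hfi i]
    simp
  have h1 : Gop n m c f = some 0 := by
    rw [Gop, if_pos hcond, hf0]
  have h2 : Gop n m c' f = some 0 := by rw [← h]; exact h1
  rw [Gop] at h2
  split_ifs at h2 with hcond'
  funext i
  have := hcond' i
  rw [hf0, hfi i] at this
  simpa using this

/-- Greedy mod-`m` canonicalization of a sequence. -/
def canon (m : ℕ) (d : ℕ → ℕ) : ℕ → ℤ
  | 0 => 0
  | i + 1 => (canon m d i + 1) - ((canon m d i + 1 - (d (i + 1) : ℤ)) % (m : ℤ))

lemma canon_props {m n : ℕ} (hm : 1 ≤ m) {d : ℕ → ℕ} (hz1 : d 0 = 0)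
    (hz2 : ∀ i, i + 1 < n → 1 ≤ d (i + 1) ∧ d (i + 1) ≤ d i + 1) :
    ∀ i < n, (∃ k : ℤ, (d i : ℤ) = canon m d i + m * k) ∧
      (d i : ℤ) < canon m d i + m ∧
      (0 < i → 1 ≤ canon m d i ∧
        canon m d (i - 1) + 2 - m ≤ canon m d i ∧ canon m d i ≤ canon m d (i - 1) + 1) := by
  have hm' : (0 : ℤ) < m := by exact_mod_cast hm
  intro i
  induction i with
  | zero =>
    intro _
    have hc0 : canon m d 0 = 0 := rfl
    refine ⟨⟨0, ?_⟩, ?_, fun h => absurd h (lt_irrefl 0)⟩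
    · rw [hc0, hz1]
      push_cast
      ring
    · rw [hc0, hz1]
      push_cast
      omega
  | succ i ih =>
    intro hin
    obtain ⟨⟨ki, hki⟩, hup, _⟩ := ih (by omega)
    have hd1 := hz2 i hin
    set a : ℤ := canon m d i + 1 with ha
    set q : ℤ := (a - (d (i + 1) : ℤ)) % (m : ℤ) with hq
    have hcanon : canon m d (i + 1) = a - q := rfl
    have hq0 : 0 ≤ q := Int.emod_nonneg _ (by omega)
    have hqm : q < m := Int.emod_lt_of_pos _ hm'
    set k : ℤ := (a - (d (i + 1) : ℤ)) / (m : ℤ) with hk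
    have hdiv : (m : ℤ) * k + q = a - (d (i + 1) : ℤ) := Int.mul_ediv_add_emod _ _
    have hb1 : (1 : ℤ) ≤ (d (i + 1) : ℤ) := by exact_mod_cast hd1.1
    have hb2 : (d (i + 1) : ℤ) ≤ (d i : ℤ) + 1 := by exact_mod_cast hd1.2
    have hk0 : 0 ≤ k := by
      by_contra hneg
      push_neg at hneg
      have hk1 : k ≤ -1 := by omega
      have h1 : (m : ℤ) * k ≤ -(m : ℤ) := by
        have := mul_le_mul_of_nonneg_left hk1 (show (0 : ℤ) ≤ m by omega)
        rwa [mul_neg_one] at this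
      have h2 : (d (i + 1) : ℤ) ≥ a + 1 := by omega
      have h3 : (d i : ℤ) ≥ canon m d i + 1 := by omega
      have h4 : 1 ≤ ki := by
        by_contra h5
        push_neg at h5
        have h6 : (m : ℤ) * ki ≤ 0 :=
          mul_nonpos_of_nonneg_of_nonpos (by omega) (by omega)
        omega
      have h6 : (m : ℤ) * 1 ≤ (m : ℤ) * ki :=
        mul_le_mul_of_nonneg_left h4 (by omega)
      rw [mul_one] at h6
      omega
    have hmk : 0 ≤ (m : ℤ) * k := mul_nonneg (by omega) hk0
    refine ⟨⟨-k, ?_⟩, ?_, fun _ => ⟨?_, ?_, ?_⟩⟩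
    · rw [hcanon, mul_neg]
      omega
    · rw [hcanon]
      omega
    · rw [hcanon]
      omega
    · rw [hcanon]
      simp only [Nat.add_sub_cancel]
      omega
    · rw [hcanon]
      simp only [Nat.add_sub_cancel]
      omega

lemma exists_canonical {m n : ℕ} (hm : 1 ≤ m) (hn : 1 ≤ n) (d : Fin n → ℕ)
    (hd : IsZag d) :
    ∃ e : Fin n → ℕ,
      (IsZag e ∧ ∀ i : ℕ, ∀ h : i + 1 < n,
        (2 - (m : ℤ) ≤ (e ⟨i + 1, h⟩ : ℤ) - (e ⟨i, Nat.lt_of_succ_lt h⟩ : ℤ)) ∧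
        ((e ⟨i + 1, h⟩ : ℤ) - (e ⟨i, Nat.lt_of_succ_lt h⟩ : ℤ) ≤ 1)) ∧
      ∀ i : Fin n, ((e i : ℕ) : ZMod m) = ((d i : ℕ) : ZMod m) := by
  have hn0 : 0 < n := hn
  set dd : ℕ → ℕ := fun j => if hj : j < n then d ⟨j, hj⟩ else 0 with hdd
  have hz1 : dd 0 = 0 := by
    show (if hj : 0 < n then d ⟨0, hj⟩ else 0) = 0
    rw [dif_pos hn0]
    exact hd.1 hn0
  have hz2 : ∀ i, i + 1 < n → 1 ≤ dd (i + 1) ∧ dd (i + 1) ≤ dd i + 1 := by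
    intro i h
    have e1 : dd (i + 1) = d ⟨i + 1, h⟩ := by
      show (if hj : i + 1 < n then d ⟨i + 1, hj⟩ else 0) = _
      rw [dif_pos h]
    have e2 : dd i = d ⟨i, Nat.lt_of_succ_lt h⟩ := by
      show (if hj : i < n then d ⟨i, hj⟩ else 0) = _
      rw [dif_pos (Nat.lt_of_succ_lt h)]
    rw [e1, e2]
    exact hd.2.2 i h
  have hc := canon_props (n := n) hm hz1 hz2
  have h00 : canon m dd 0 = 0 := rfl
  have hnonneg : ∀ i, i < n → 0 ≤ canon m dd i := by
    intro i hi
    cases i with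
    | zero => rw [h00]
    | succ i' =>
      have := ((hc _ hi).2.2 (Nat.succ_pos _)).1
      omega
  refine ⟨fun i => (canon m dd (i : ℕ)).toNat, ⟨⟨?_, ?_, ?_⟩, ?_⟩, ?_⟩
  · intro h
    simp only
    rw [h00]
    rfl
  · intro h
    simp only
    have hw := (hc 1 h).2.2 (by omega)
    rw [h00] at hw
    omega
  · intro i h
    simp only
    have hw := (hc (i + 1) h).2.2 (by omega)
    rw [Nat.add_sub_cancel] at hw
    have h0 := hnonneg i (by omega)
    omega
  · intro i h
    simp only
    have hw := (hc (i + 1) h).2.2 (by omega)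
    rw [Nat.add_sub_cancel] at hw
    have h0 := hnonneg i (by omega)
    have h1 := hnonneg (i + 1) h
    constructor
    · omega
    · omega
  · intro i
    obtain ⟨k, hk⟩ := (hc (i : ℕ) i.2).1
    have hdi : dd (i : ℕ) = d i := by
      show (if hj : (i : ℕ) < n then d ⟨(i : ℕ), hj⟩ else 0) = d i
      rw [dif_pos i.2]
    have h1 : (((canon m dd (i : ℕ)).toNat : ℕ) : ℤ) = canon m dd (i : ℕ) :=
      Int.toNat_of_nonneg (hnonneg (i : ℕ) i.2)
    have h2 : ((d i : ℕ) : ℤ) = (((canon m dd (i : ℕ)).toNat : ℕ) : ℤ) + (m : ℤ) * k := by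
      rw [h1, ← hdi]
      exact hk
    have h3 : (((d i : ℕ) : ℤ) : ZMod m) = ((((canon m dd (i : ℕ)).toNat : ℕ) : ℤ) : ZMod m) := by
      rw [h2]
      push_cast [ZMod.natCast_self]
      ring
    push_cast at h3
    exact h3.symm

lemma canonical_unique {m n : ℕ} (hm : 1 ≤ m) (e e' : Fin n → ℕ)
    (he : IsZag e ∧ ∀ i : ℕ, ∀ h : i + 1 < n,
        (2 - (m : ℤ) ≤ (e ⟨i + 1, h⟩ : ℤ) - (e ⟨i, Nat.lt_of_succ_lt h⟩ : ℤ)) ∧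
        ((e ⟨i + 1, h⟩ : ℤ) - (e ⟨i, Nat.lt_of_succ_lt h⟩ : ℤ) ≤ 1))
    (he' : IsZag e' ∧ ∀ i : ℕ, ∀ h : i + 1 < n,
        (2 - (m : ℤ) ≤ (e' ⟨i + 1, h⟩ : ℤ) - (e' ⟨i, Nat.lt_of_succ_lt h⟩ : ℤ)) ∧
        ((e' ⟨i + 1, h⟩ : ℤ) - (e' ⟨i, Nat.lt_of_succ_lt h⟩ : ℤ) ≤ 1))
    (hcong : ∀ i : Fin n, ((e i : ℕ) : ZMod m) = ((e' i : ℕ) : ZMod m)) :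
    e = e' := by
  have key : ∀ j, ∀ hj : j < n, e ⟨j, hj⟩ = e' ⟨j, hj⟩ := by
    intro j
    induction j with
    | zero =>
      intro hj
      rw [he.1.1 hj, he'.1.1 hj]
    | succ j ihj =>
      intro hj
      have hstep1 := he.2 j hj
      have hstep2 := he'.2 j hj
      have hij := ihj (Nat.lt_of_succ_lt hj)
      have hmod : e ⟨j + 1, hj⟩ ≡ e' ⟨j + 1, hj⟩ [MOD m] :=
        (ZMod.natCast_eq_natCast_iff _ _ _).mp (hcong ⟨j + 1, hj⟩)
      obtain ⟨t, ht⟩ := hmod.dvd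
      have ht0 : t = 0 := by
        rcases lt_trichotomy t 0 with h | h | h
        · have h1 : (m : ℤ) * t ≤ -(m : ℤ) := by
            have := mul_le_mul_of_nonneg_left (show t ≤ -1 by omega)
              (show (0 : ℤ) ≤ m by omega)
            rwa [mul_neg_one] at this
          omega
        · exact h
        · have h1 : (m : ℤ) * 1 ≤ (m : ℤ) * t :=
            mul_le_mul_of_nonneg_left (by omega) (by omega)
          rw [mul_one] at h1
          omega
      rw [ht0, mul_zero] at ht
      omega
  funext i
  exact key (i : ℕ) i.2

end AssocSpec


open AssocSpec in
/-- For the directed `m`-cycle `C_m`, the associative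
spectrum `s_n(A(C_m))` equals the number of zag sequences `(d₁, …, d_n)` with
`d_{i+1} - d_i ∈ {2-m, …, 0, 1}` for all `i ∈ {1, …, n-1}`. -/
theorem stmt6 (m : ℕ) (hm : 1 ≤ m) (n : ℕ) (hn : 1 ≤ n) :
    spectrum (gaOp (fun i j : ZMod m => j = i + 1)) n =
    Set.ncard {d : Fin n → ℕ | IsZag d ∧
      ∀ i : ℕ, ∀ h : i + 1 < n,
        (2 - (m : ℤ) ≤ (d ⟨i + 1, h⟩ : ℤ) - (d ⟨i, Nat.lt_of_succ_lt h⟩ : ℤ)) ∧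
        ((d ⟨i + 1, h⟩ : ℤ) - (d ⟨i, Nat.lt_of_succ_lt h⟩ : ℤ) ≤ 1)} := by
  classical
  have hn0 : 0 < n := hn
  set S₂ : Set (Fin n → ZMod m) :=
    {c | ∃ t : BTree, t.size = n ∧ c = fun i : Fin n => ((t.depth (i : ℕ) : ℕ) : ZMod m)}
    with hS2
  have hS1 : {g : (ℕ → Option (ZMod m)) → Option (ZMod m) |
      ∃ t : BTree, t.size = n ∧
        g = BTree.termOp (gaOp (fun i j : ZMod m => j = i + 1)) t}
      = Gop n m '' S₂ := by
    ext g
    constructor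
    · rintro ⟨t, ht, rfl⟩
      exact ⟨_, ⟨t, ht, rfl⟩, (termOp_eq_Gop hn t ht).symm⟩
    · rintro ⟨c, ⟨t, ht, rfl⟩, rfl⟩
      exact ⟨t, ht, (termOp_eq_Gop hn t ht).symm⟩
  have hsub : S₂ ⊆ {c : Fin n → ZMod m | c ⟨0, hn0⟩ = 0} := by
    rintro c ⟨t, ht, rfl⟩
    show ((t.depth 0 : ℕ) : ZMod m) = 0
    rw [t.depth_zero]
    simp
  show Set.ncard {g : (ℕ → Option (ZMod m)) → Option (ZMod m) |
      ∃ t : BTree, t.size = n ∧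
        g = BTree.termOp (gaOp (fun i j : ZMod m => j = i + 1)) t} = _
  rw [hS1, Set.ncard_image_of_injOn ((Gop_injOn hn0).mono hsub)]
  have hS2' : S₂ = (fun (d : Fin n → ℕ) => fun i : Fin n => ((d i : ℕ) : ZMod m)) ''
      {d : Fin n → ℕ | IsZag d ∧
        ∀ i : ℕ, ∀ h : i + 1 < n,
          (2 - (m : ℤ) ≤ (d ⟨i + 1, h⟩ : ℤ) - (d ⟨i, Nat.lt_of_succ_lt h⟩ : ℤ)) ∧
          ((d ⟨i + 1, h⟩ : ℤ) - (d ⟨i, Nat.lt_of_succ_lt h⟩ : ℤ) ≤ 1)} := by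
    ext c
    constructor
    · rintro ⟨t, ht, rfl⟩
      obtain ⟨e, he, hcong⟩ :=
        exists_canonical hm hn (fun i : Fin n => t.depth (i : ℕ)) (BTree.isZag_depth t ht)
      refine ⟨e, he, ?_⟩
      funext i
      exact hcong i
    · rintro ⟨e, heS, rfl⟩
      obtain ⟨t, ht, hdep⟩ := BTree.exists_tree_isZag hn e heS.1
      refine ⟨t, ht, ?_⟩
      funext i
      rw [hdep i]
  rw [hS2', Set.ncard_image_of_injOn]
  intro e heS e' heS' hEq
  exact canonical_unique hm e e' ⟨heS.1, heS.2⟩ ⟨heS'.1, heS'.2⟩ (fun i => congrFun hEq i)
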